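/- Let β ∈ (0,1) and λ_h, λ_f > 0. The function g : [0,1] → ℝ defined by g(π) = π^{1−β} λ_h^{β} + (1−π)^{1−β} λ_f^{β} attains its maximum at the unique point π* = λ_h / (λ_h + λ_f); that is, g(π*) ≥ g(π) for all π ∈ [0,1], with equality only at π = π*. -/

import Mathlib

open Real

/-- Strict tangent-line inequality for `x ^ θ` with `0 < θ < 1`. -/
lemma rpow_tangent_lt {θ x c : ℝ} (h1 : 0 < θ) (h2 : θ < 1) (hx : 0 ≤ x) (hc : 0 < c)
    (hne : x ≠ c) : x ^ θ < c ^ θ + θ * c ^ (θ - 1) * (x - c) := by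
  have hs : -1 ≤ x / c - 1 := by
    have : 0 ≤ x / c := div_nonneg hx hc.le
    linarith
  have hs' : x / c - 1 ≠ 0 := by
    intro h
    apply hne
    have hxc : x / c = 1 := by linarith
    field_simp at hxc
    linarith
  have key := rpow_one_add_lt_one_add_mul_self hs hs' h1 h2
  rw [add_sub_cancel] at key
  have hcθ : (0:ℝ) < c ^ θ := Real.rpow_pos_of_pos hc θ
  rw [Real.div_rpow hx hc.le] at key
  have key2 : x ^ θ < (1 + θ * (x / c - 1)) * c ^ θ := (div_lt_iff₀ hcθ).mp key
  have hc1 : c ^ (θ - 1) = c ^ θ / c := by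
    rw [Real.rpow_sub hc, Real.rpow_one]
  rw [hc1]
  have heq : (1 + θ * (x / c - 1)) * c ^ θ = c ^ θ + θ * (c ^ θ / c) * (x - c) := by
    field_simp
  linarith [heq ▸ key2]

/-- **Diffusion-optimal domestic trade share in the two-country model.**
The idea-diffusion flow `g(π) = π^{1-β} λ_h^β + (1-π)^{1-β} λ_f^β` on `[0,1]`
attains its maximum at the unique point `π* = λ_h / (λ_h + λ_f)`. -/
theorem diffusion_optimum_two_country (β lh lf : ℝ)
    (hβ : β ∈ Set.Ioo (0 : ℝ) 1) (hlh : 0 < lh) (hlf : 0 < lf) :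
    (∀ p ∈ Set.Icc (0 : ℝ) 1,
        p ^ (1 - β) * lh ^ β + (1 - p) ^ (1 - β) * lf ^ β
          ≤ (lh / (lh + lf)) ^ (1 - β) * lh ^ β
              + (1 - lh / (lh + lf)) ^ (1 - β) * lf ^ β) ∧
    (∀ p ∈ Set.Icc (0 : ℝ) 1,
        p ^ (1 - β) * lh ^ β + (1 - p) ^ (1 - β) * lf ^ β
            = (lh / (lh + lf)) ^ (1 - β) * lh ^ β
                + (1 - lh / (lh + lf)) ^ (1 - β) * lf ^ β
          → p = lh / (lh + lf)) := by
  obtain ⟨hβ0, hβ1⟩ := hβ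
  set θ : ℝ := 1 - β with hθdef
  have hθ0 : 0 < θ := by simp [hθdef]; linarith
  have hθ1 : θ < 1 := by simp [hθdef]; linarith
  have hS : (0:ℝ) < lh + lf := by linarith
  set q : ℝ := lh / (lh + lf) with hqdef
  have hq0 : 0 < q := div_pos hlh hS
  have hq1 : q < 1 := by
    rw [hqdef, div_lt_one hS]; linarith
  have h1q : 1 - q = lf / (lh + lf) := by
    rw [hqdef]; field_simp; ring
  -- linear coefficients cancel: lh^β * q^(θ-1) = (lh+lf)^β = lf^β * (1-q)^(θ-1)
  have hcoef1 : lh ^ β * q ^ (θ - 1) = (lh + lf) ^ β := by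
    have : θ - 1 = -β := by rw [hθdef]; ring
    rw [this, hqdef, Real.rpow_neg (div_nonneg hlh.le hS.le),
      Real.div_rpow hlh.le hS.le, inv_div, mul_div_assoc', mul_comm,
      mul_div_assoc, div_self (ne_of_gt (Real.rpow_pos_of_pos hlh β)), mul_one]
  have hcoef2 : lf ^ β * (1 - q) ^ (θ - 1) = (lh + lf) ^ β := by
    have : θ - 1 = -β := by rw [hθdef]; ring
    rw [this, h1q, Real.rpow_neg (div_nonneg hlf.le hS.le),
      Real.div_rpow hlf.le hS.le, inv_div, mul_div_assoc', mul_comm,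
      mul_div_assoc, div_self (ne_of_gt (Real.rpow_pos_of_pos hlf β)), mul_one]
  -- strict inequality away from q
  have key : ∀ p ∈ Set.Icc (0:ℝ) 1, p ≠ q →
      p ^ θ * lh ^ β + (1 - p) ^ θ * lf ^ β < q ^ θ * lh ^ β + (1 - q) ^ θ * lf ^ β := by
    intro p hp hne
    obtain ⟨hp0, hp1⟩ := hp
    have t1 := rpow_tangent_lt hθ0 hθ1 hp0 hq0 hne
    have hne' : 1 - p ≠ 1 - q := by
      intro h; apply hne; linarith
    have t2 := rpow_tangent_lt hθ0 hθ1 (by linarith : (0:ℝ) ≤ 1 - p)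
      (by linarith : (0:ℝ) < 1 - q) hne'
    have hlhβ : (0:ℝ) < lh ^ β := Real.rpow_pos_of_pos hlh β
    have hlfβ : (0:ℝ) < lf ^ β := Real.rpow_pos_of_pos hlf β
    have m1 := mul_lt_mul_of_pos_right t1 hlhβ
    have m2 := mul_lt_mul_of_pos_right t2 hlfβ
    have e1 : (q ^ θ + θ * q ^ (θ - 1) * (p - q)) * lh ^ β
        = q ^ θ * lh ^ β + θ * (lh ^ β * q ^ (θ - 1)) * (p - q) := by ring
    have e2 : ((1 - q) ^ θ + θ * (1 - q) ^ (θ - 1) * ((1 - p) - (1 - q))) * lf ^ β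
        = (1 - q) ^ θ * lf ^ β + θ * (lf ^ β * (1 - q) ^ (θ - 1)) * (q - p) := by ring
    rw [e1, hcoef1] at m1
    rw [e2, hcoef2] at m2
    nlinarith [m1, m2]
  constructor
  · intro p hp
    by_cases hne : p = q
    · subst hne; rfl
    · exact (key p hp hne).le
  · intro p hp heq
    by_contra hne
    exact absurd heq (ne_of_lt (key p hp hne))
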